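/- There exists a BSAF F with an attack splitting (F₁,F₂,R₃) and a grounded extension E of F such that E ∩ A₁ is not a grounded extension of F₁. Concretely: let A = {a,b,c,d,e}, R = {({a},b), ({b},a), ({a},c), ({c},e)}, S = {({d},e)}, A₁ = {a,b}, A₂ = {c,d,e}, R₃ = {({a},c)}. Then E = {a,d,e} is the unique grounded extension of F, but E ∩ A₁ = {a} is not grounded in F₁ (whose grounded extension is ∅). -/
import Mathlib


variable {α : Type*}

/-- A bipolar set-argumentation framework: arguments `A`, collective attacks `R`,
collective supports `S`. -/
structure BSAF (α : Type*) where
  A : Set α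
  R : Set (Set α × α)
  S : Set (Set α × α)

namespace BSAF

/-- Membership in the least superset of `E` that is closed under the supports of `F`. -/
inductive InCl (F : BSAF α) (E : Set α) : α → Prop
  | base {a : α} : a ∈ E → InCl F E a
  | step {T : Set α} {h : α} : (T, h) ∈ F.S → (∀ t ∈ T, InCl F E t) → InCl F E h

/-- The closure of `E` under the supports of `F`. -/
def cl (F : BSAF α) (E : Set α) : Set α := {a | F.InCl E a}

/-- `E` is closed if its closure equals itself. -/
def Closed (F : BSAF α) (E : Set α) : Prop := F.cl E = E

/-- `E` attacks the set `D`. -/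
def Attacks (F : BSAF α) (E D : Set α) : Prop :=
  ∃ T h, (T, h) ∈ F.R ∧ T ⊆ E ∧ h ∈ D

/-- `E` is conflict-free: it does not attack itself. -/
def ConflictFree (F : BSAF α) (E : Set α) : Prop :=
  ¬ ∃ T h, (T, h) ∈ F.R ∧ T ⊆ E ∧ h ∈ E

/-- `E` defends `a`: every closed attacker of `a` is attacked by `E`. -/
def Defends (F : BSAF α) (E : Set α) (a : α) : Prop :=
  ∀ D : Set α, D ⊆ F.A → F.Closed D → (∃ T, (T, a) ∈ F.R ∧ T ⊆ D) → F.Attacks E D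

/-- `E` is admissible: conflict-free, closed, and defends each of its members. -/
def Admissible (F : BSAF α) (E : Set α) : Prop :=
  E ⊆ F.A ∧ F.ConflictFree E ∧ F.Closed E ∧ ∀ a ∈ E, F.Defends E a

/-- `E` is complete: admissible and contains every argument it defends. -/
def Complete (F : BSAF α) (E : Set α) : Prop :=
  F.Admissible E ∧ ∀ a ∈ F.A, F.Defends E a → a ∈ E

/-- Grounded: ⊆-minimal complete. -/
def Grounded (F : BSAF α) (E : Set α) : Prop :=
  F.Complete E ∧ ∀ E', F.Complete E' → E' ⊆ E → E' = E

/-- Preferred: ⊆-maximal admissible. -/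
def Preferred (F : BSAF α) (E : Set α) : Prop :=
  F.Admissible E ∧ ∀ E', F.Admissible E' → E ⊆ E' → E' = E

/-- Stable: admissible and attacks every outside argument. -/
def Stable (F : BSAF α) (E : Set α) : Prop :=
  F.Admissible E ∧ ∀ x ∈ F.A \ E, ∃ T, (T, x) ∈ F.R ∧ T ⊆ E

end BSAF
namespace BSAF

/-- All links of `G` stay within its argument set. -/
def WithinA (G : BSAF α) : Prop :=
  (∀ p ∈ G.R, p.1 ⊆ G.A ∧ p.2 ∈ G.A) ∧ (∀ p ∈ G.S, p.1 ⊆ G.A ∧ p.2 ∈ G.A)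

/-- `(F₁, F₂, R₃)` is an attack splitting of `F`. -/
def IsAttackSplitting (F F₁ F₂ : BSAF α) (R₃ : Set (Set α × α)) : Prop :=
  F₁.WithinA ∧ F₂.WithinA ∧
  F₁.A ∩ F₂.A = ∅ ∧ F.A = F₁.A ∪ F₂.A ∧
  F.S = F₁.S ∪ F₂.S ∧
  F.R = F₁.R ∪ F₂.R ∪ R₃ ∧
  ∀ p ∈ R₃, (p.1 ∩ F₁.A).Nonempty ∧ p.1 ⊆ F.A ∧ p.2 ∈ F₂.A

/-- The closed negative links `R₃ᶜ = {(cl(T), h) | (T, h) ∈ R₃}`. -/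
def closedLinks (F : BSAF α) (R₃ : Set (Set α × α)) : Set (Set α × α) :=
  {p | ∃ T h, (T, h) ∈ R₃ ∧ p = (F.cl T, h)}

/-- The arguments attacked by `E` via the attack relation `Rs`. -/
def attackedBy (Rs : Set (Set α × α)) (E : Set α) : Set α :=
  {a | ∃ T, (T, a) ∈ Rs ∧ T ⊆ E}

/-- The `(E₁, R₃ᶜ)`-reduct of `F₂`. -/
def Rreduct (F F₁ F₂ : BSAF α) (R₃ : Set (Set α × α)) (E₁ : Set α) : BSAF α where
  A := F₂.A
  R := F₂.R ∪ {p | ∃ T h, (T, h) ∈ F.closedLinks R₃ ∧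
        T ∩ attackedBy (F₁.R ∪ F.closedLinks R₃) E₁ = ∅ ∧
        T ∩ F₁.A ⊆ E₁ ∧ p = (T ∩ F₂.A, h)}
  S := F₂.S

/-- The undecided links in `R₃ᶜ` w.r.t. `E₁`. -/
def undecidedLinks (F F₁ : BSAF α) (R₃ : Set (Set α × α)) (E₁ : Set α) : Set (Set α × α) :=
  {p | p ∈ F.closedLinks R₃ ∧
    p.1 ∩ attackedBy (F₁.R ∪ F.closedLinks R₃) E₁ = ∅ ∧ ¬ p.1 ∩ F₁.A ⊆ E₁}

/-- The modification `F₂* = mod^{E₁}_{R₃ᶜ}(F₂^{E₁})`, with fresh self-attacker `s₀`. -/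
def modification (F F₁ F₂ : BSAF α) (R₃ : Set (Set α × α)) (E₁ : Set α) (s₀ : α) : BSAF α where
  A := F₂.A ∪ {s₀}
  R := (F.Rreduct F₁ F₂ R₃ E₁).R ∪ {({s₀}, s₀)} ∪
       {p | ∃ T h, (T, h) ∈ F.undecidedLinks F₁ R₃ E₁ ∧ p = ((T ∩ F₂.A) ∪ {s₀}, h)}
  S := F₂.S

end BSAF

namespace BSAF

lemma cl_eq_of (F : BSAF α) (E : Set α) (h : ∀ p ∈ F.S, p.1 ⊆ E → p.2 ∈ E) :
    F.Closed E := by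
  ext a
  constructor
  · intro ha
    induction ha with
    | base h' => exact h'
    | step hs _ ih => exact h _ hs ih
  · exact fun ha => InCl.base ha

/-- The framework F₁ of the counterexample. -/
private def CexF1 : BSAF (Fin 5) :=
  ⟨({0, 1} : Set (Fin 5)),
    {(({0} : Set (Fin 5)), (1 : Fin 5)), (({1} : Set (Fin 5)), (0 : Fin 5))},
    (∅ : Set (Set (Fin 5) × Fin 5))⟩

private lemma cexF1_complete_empty : CexF1.Complete (∅ : Set (Fin 5)) := by
  constructor
  · refine ⟨Set.empty_subset _, ?_, ?_, ?_⟩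
    · rintro ⟨T, h, -, -, hh⟩
      exact hh
    · apply cl_eq_of
      intro p hp
      simp [CexF1] at hp
    · intro a ha
      exact absurd ha (Set.notMem_empty a)
  · intro a ha hdef
    exfalso
    simp only [CexF1, Set.mem_insert_iff, Set.mem_singleton_iff] at ha
    rcases ha with rfl | rfl
    · have := hdef {1} (by intro x hx; simp at hx; simp [CexF1, hx])
        (cl_eq_of _ _ (by intro p hp; simp [CexF1] at hp))
        ⟨{1}, by simp [CexF1], subset_rfl⟩
      obtain ⟨T, h, hR, hTE, -⟩ := this
      simp only [CexF1, Set.mem_insert_iff, Set.mem_singleton_iff, Prod.mk.injEq] at hR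
      rcases hR with ⟨rfl, rfl⟩ | ⟨rfl, rfl⟩
      · exact absurd (hTE rfl) (Set.notMem_empty _)
      · exact absurd (hTE rfl) (Set.notMem_empty _)
    · have := hdef {0} (by intro x hx; simp at hx; simp [CexF1, hx])
        (cl_eq_of _ _ (by intro p hp; simp [CexF1] at hp))
        ⟨{0}, by simp [CexF1], subset_rfl⟩
      obtain ⟨T, h, hR, hTE, -⟩ := this
      simp only [CexF1, Set.mem_insert_iff, Set.mem_singleton_iff, Prod.mk.injEq] at hR
      rcases hR with ⟨rfl, rfl⟩ | ⟨rfl, rfl⟩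
      · exact absurd (hTE rfl) (Set.notMem_empty _)
      · exact absurd (hTE rfl) (Set.notMem_empty _)

/-- The framework F of the counterexample. -/
private def CexF : BSAF (Fin 5) :=
  ⟨Set.univ,
    {(({0} : Set (Fin 5)), (1 : Fin 5)), (({1} : Set (Fin 5)), (0 : Fin 5)),
     (({0} : Set (Fin 5)), (2 : Fin 5)), (({2} : Set (Fin 5)), (4 : Fin 5))},
    {(({3} : Set (Fin 5)), (4 : Fin 5))}⟩

private lemma cexF_key : ∀ E' : Set (Fin 5), CexF.Complete E' →
    ({0, 3, 4} : Set (Fin 5)) ⊆ E' := by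
  rintro E' ⟨⟨hA, hcf, hcl, hdef⟩, hcomplete⟩
  have h3 : (3 : Fin 5) ∈ E' := by
    apply hcomplete 3 (Set.mem_univ _)
    rintro D - - ⟨T, hT, -⟩
    simp [CexF, Prod.ext_iff] at hT
  have h4 : (4 : Fin 5) ∈ E' := by
    have : (4 : Fin 5) ∈ CexF.cl E' := by
      refine InCl.step (T := {3}) (by simp [CexF]) ?_
      intro t ht
      simp only [Set.mem_singleton_iff] at ht
      subst ht
      exact InCl.base h3
    rwa [hcl] at this
  have h0 : (0 : Fin 5) ∈ E' := by
    have hD2 : CexF.Closed ({2} : Set (Fin 5)) := by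
      apply cl_eq_of
      rintro p hp hsub
      simp only [CexF, Set.mem_singleton_iff] at hp
      subst hp
      exact absurd (hsub rfl) (by simp)
    have hatt := hdef 4 h4 {2} (fun x _ => Set.mem_univ x) hD2
      ⟨{2}, by simp [CexF], subset_rfl⟩
    obtain ⟨T, h, hR, hTE, hhD⟩ := hatt
    simp only [Set.mem_singleton_iff] at hhD
    subst hhD
    simp only [CexF, Set.mem_insert_iff, Set.mem_singleton_iff, Prod.mk.injEq] at hR
    rcases hR with ⟨rfl, h⟩ | ⟨rfl, h⟩ | ⟨rfl, h⟩ | ⟨rfl, h⟩ <;> first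
      | exact absurd h (by decide)
      | exact hTE rfl
  intro x hx
  simp only [Set.mem_insert_iff, Set.mem_singleton_iff] at hx
  rcases hx with rfl | rfl | rfl
  · exact h0
  · exact h3
  · exact h4

private lemma cexF_complete : CexF.Complete ({0, 3, 4} : Set (Fin 5)) := by
  constructor
  · refine ⟨fun x _ => Set.mem_univ x, ?_, ?_, ?_⟩
    · rintro ⟨T, h, hR, hTE, hhE⟩
      simp only [CexF, Set.mem_insert_iff, Set.mem_singleton_iff, Prod.mk.injEq] at hR
      rcases hR with ⟨rfl, rfl⟩ | ⟨rfl, rfl⟩ | ⟨rfl, rfl⟩ | ⟨rfl, rfl⟩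
      · simp at hhE
      · exact absurd (hTE rfl) (by simp)
      · simp at hhE
      · exact absurd (hTE rfl) (by simp)
    · apply cl_eq_of
      rintro p hp hsub
      simp only [CexF, Set.mem_singleton_iff] at hp
      subst hp
      simp
    · intro a ha D hDA hDcl hatt
      simp only [Set.mem_insert_iff, Set.mem_singleton_iff] at ha
      obtain ⟨T, hT, hTD⟩ := hatt
      rcases ha with rfl | rfl | rfl
      · -- a = 0, attacker must contain 1
        simp only [CexF, Set.mem_insert_iff, Set.mem_singleton_iff, Prod.mk.injEq] at hT
        rcases hT with ⟨rfl, h⟩ | ⟨rfl, h⟩ | ⟨rfl, h⟩ | ⟨rfl, h⟩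
        · exact absurd h (by decide)
        · exact ⟨{0}, 1, by simp [CexF], by simp, hTD rfl⟩
        · exact absurd h (by decide)
        · exact absurd h (by decide)
      · simp [CexF, Prod.ext_iff] at hT
      · -- a = 4, attacker must contain 2
        simp only [CexF, Set.mem_insert_iff, Set.mem_singleton_iff, Prod.mk.injEq] at hT
        rcases hT with ⟨rfl, h⟩ | ⟨rfl, h⟩ | ⟨rfl, h⟩ | ⟨rfl, h⟩
        · exact absurd h (by decide)
        · exact absurd h (by decide)
        · exact absurd h (by decide)
        · exact ⟨{0}, 2, by simp [CexF], by simp, hTD rfl⟩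
  · intro a _ hdef
    have hD0 : CexF.Closed ({0} : Set (Fin 5)) := by
      apply cl_eq_of
      rintro p hp hsub
      simp only [CexF, Set.mem_singleton_iff] at hp
      subst hp
      exact absurd (hsub rfl) (by simp)
    have hno : ¬ CexF.Attacks ({0, 3, 4} : Set (Fin 5)) ({0} : Set (Fin 5)) := by
      rintro ⟨T, h, hR, hTE, hhD⟩
      simp only [Set.mem_singleton_iff] at hhD
      subst hhD
      simp only [CexF, Set.mem_insert_iff, Set.mem_singleton_iff, Prod.mk.injEq] at hR
      rcases hR with ⟨rfl, h⟩ | ⟨rfl, h⟩ | ⟨rfl, h⟩ | ⟨rfl, h⟩ <;> first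
        | exact absurd h (by decide)
        | exact absurd (hTE rfl) (by simp)
    fin_cases a
    · simp
    · exact absurd (hdef {0} (fun x _ => Set.mem_univ x) hD0
        ⟨{0}, by simp [CexF], subset_rfl⟩) hno
    · exact absurd (hdef {0} (fun x _ => Set.mem_univ x) hD0
        ⟨{0}, by simp [CexF], subset_rfl⟩) hno
    · simp
    · simp

end BSAF

/-- Counterexample: the restriction of a grounded extension to `A₁` need not be
grounded in `F₁`.  Arguments: `a = 0, b = 1, c = 2, d = 3, e = 4`. -/
theorem BSAF.grounded_projection_fails :
    ∃ (F F₁ F₂ : BSAF (Fin 5)) (R₃ : Set (Set (Fin 5) × Fin 5)),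
      F = ⟨Set.univ,
            {(({0} : Set (Fin 5)), (1 : Fin 5)), (({1} : Set (Fin 5)), (0 : Fin 5)),
             (({0} : Set (Fin 5)), (2 : Fin 5)), (({2} : Set (Fin 5)), (4 : Fin 5))},
            {(({3} : Set (Fin 5)), (4 : Fin 5))}⟩ ∧
      F₁ = ⟨({0, 1} : Set (Fin 5)),
            {(({0} : Set (Fin 5)), (1 : Fin 5)), (({1} : Set (Fin 5)), (0 : Fin 5))},
            (∅ : Set (Set (Fin 5) × Fin 5))⟩ ∧
      F₂ = ⟨({2, 3, 4} : Set (Fin 5)),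
            {(({2} : Set (Fin 5)), (4 : Fin 5))},
            {(({3} : Set (Fin 5)), (4 : Fin 5))}⟩ ∧
      R₃ = {(({0} : Set (Fin 5)), (2 : Fin 5))} ∧
      F.IsAttackSplitting F₁ F₂ R₃ ∧
      F.Grounded ({0, 3, 4} : Set (Fin 5)) ∧
      (∀ G : Set (Fin 5), F.Grounded G → G = ({0, 3, 4} : Set (Fin 5))) ∧
      ¬ F₁.Grounded ({0} : Set (Fin 5)) ∧
      F₁.Grounded (∅ : Set (Fin 5)) := by
  classical
  refine ⟨CexF, CexF1,
    ⟨({2, 3, 4} : Set (Fin 5)),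
      {(({2} : Set (Fin 5)), (4 : Fin 5))},
      {(({3} : Set (Fin 5)), (4 : Fin 5))}⟩,
    {(({0} : Set (Fin 5)), (2 : Fin 5))},
    rfl, rfl, rfl, rfl, ?_, ?_, ?_, ?_, ?_⟩
  · -- attack splitting
    refine ⟨⟨?_, ?_⟩, ⟨?_, ?_⟩, ?_, ?_, ?_, ?_, ?_⟩
    · rintro p hp
      simp only [CexF1, Set.mem_insert_iff, Set.mem_singleton_iff] at hp
      rcases hp with rfl | rfl <;>
        exact ⟨by intro x hx; simp at hx; simp [CexF1, hx], by simp [CexF1]⟩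
    · rintro p hp
      simp [CexF1] at hp
    · rintro p hp
      simp only [Set.mem_singleton_iff] at hp
      subst hp
      exact ⟨by intro x hx; simp at hx; simp [hx], by simp⟩
    · rintro p hp
      simp only [Set.mem_singleton_iff] at hp
      subst hp
      exact ⟨by intro x hx; simp at hx; simp [hx], by simp⟩
    · ext x
      simp only [CexF1, Set.mem_inter_iff, Set.mem_insert_iff, Set.mem_singleton_iff,
        Set.mem_empty_iff_false, iff_false, not_and]
      fin_cases x <;> decide
    · ext x
      simp only [CexF, CexF1, Set.mem_univ, Set.mem_union, Set.mem_insert_iff,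
        Set.mem_singleton_iff, true_iff]
      fin_cases x <;> decide
    · ext p
      simp [CexF, CexF1]
    · ext p
      simp only [CexF, CexF1, Set.mem_union, Set.mem_insert_iff, Set.mem_singleton_iff]
      tauto
    · rintro p hp
      simp only [Set.mem_singleton_iff] at hp
      subst hp
      refine ⟨⟨0, by simp [CexF1]⟩, by simp [CexF], by simp⟩
  · -- grounded
    exact ⟨cexF_complete, fun E' hE' hsub =>
      Set.Subset.antisymm hsub (cexF_key E' hE')⟩
  · -- uniqueness
    rintro G ⟨hGc, hGmin⟩
    exact (hGmin _ cexF_complete (cexF_key G hGc)).symm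
  · -- {0} not grounded in F₁
    rintro ⟨-, hmin⟩
    have := hmin ∅ cexF1_complete_empty (Set.empty_subset _)
    exact (Set.singleton_ne_empty (0 : Fin 5)) this.symm
  · -- ∅ grounded in F₁
    exact ⟨cexF1_complete_empty, fun E' _ h => Set.subset_empty_iff.mp h⟩
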